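/- Let m ≥ 1 and n ≥ 1 be integers and let x be a real number with 0 < x < π. Then ∑_{k=0}^{n} (-1)^k · C(n-k+m, m) · sin((2k+1)x) / (2k+1) > 0. -/

import Mathlib

open Real Finset

private lemma cos_odd_pi_div_two (k : ℕ) : Real.cos ((2 * k + 1) * (π / 2)) = 0 := by
  induction k with
  | zero => simp
  | succ k ih =>
    have h : ((2 * (k + 1 : ℕ) + 1 : ℝ)) * (π / 2) = (2 * k + 1) * (π / 2) + π := by
      push_cast; ring
    rw [h, Real.cos_add_pi, ih, neg_zero]

private lemma sin_odd_pi_div_two (k : ℕ) :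
    Real.sin ((2 * k + 1) * (π / 2)) = (-1 : ℝ) ^ k := by
  induction k with
  | zero => simp
  | succ k ih =>
    have h : ((2 * (k + 1 : ℕ) + 1 : ℝ)) * (π / 2) = (2 * k + 1) * (π / 2) + π := by
      push_cast; ring
    rw [h, Real.sin_add_pi, ih]
    ring

private lemma tele (N : ℕ) (t : ℝ) :
    (∑ k ∈ range N, Real.sin ((2 * k + 1) * t)) * (2 * Real.sin t)
      = 2 * Real.sin (N * t) ^ 2 := by
  induction N with
  | zero => simp
  | succ N ih =>
    rw [Finset.sum_range_succ, add_mul, ih]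
    have h1 : Real.cos (2 * (N * t)) = 1 - 2 * Real.sin (N * t) ^ 2 := by
      nlinarith [Real.cos_two_mul (N * t), Real.sin_sq_add_cos_sq (N * t)]
    have h2 : Real.cos (2 * (((N : ℝ) + 1) * t)) = 1 - 2 * Real.sin (((N : ℝ) + 1) * t) ^ 2 := by
      nlinarith [Real.cos_two_mul (((N : ℝ) + 1) * t), Real.sin_sq_add_cos_sq (((N : ℝ) + 1) * t)]
    have h3 : Real.cos (2 * (N * t)) - Real.cos (2 * (((N : ℝ) + 1) * t))
        = 2 * Real.sin ((2 * N + 1) * t) * Real.sin t := by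
      rw [Real.cos_sub_cos]
      have e1 : (2 * (N * t) + 2 * (((N : ℝ) + 1) * t)) / 2 = (2 * N + 1) * t := by ring
      have e2 : (2 * (N * t) - 2 * (((N : ℝ) + 1) * t)) / 2 = -t := by ring
      rw [e1, e2, Real.sin_neg]
      ring
    push_cast
    nlinarith [h1, h2, h3]

private lemma g_nonneg (N : ℕ) (t : ℝ) (h0 : 0 ≤ t) (h1 : t ≤ π / 2) :
    0 ≤ ∑ k ∈ range N, Real.sin ((2 * k + 1) * t) := by
  rcases eq_or_lt_of_le h0 with rfl | ht
  · simp
  · have hs : 0 < Real.sin t :=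
      Real.sin_pos_of_pos_of_lt_pi ht (by linarith [Real.pi_pos])
    nlinarith [tele N t, sq_nonneg (Real.sin (N * t))]

private lemma g_pos (N : ℕ) (hN : 1 ≤ N) (t : ℝ) (ha : π / 2 - π / (2 * N) < t)
    (hb : t < π / 2) : 0 < ∑ k ∈ range N, Real.sin ((2 * k + 1) * t) := by
  have hNR : (1 : ℝ) ≤ N := by exact_mod_cast hN
  have hpi := Real.pi_pos
  have hdiv : π / (2 * N) ≤ π / 2 := by
    apply div_le_div_of_nonneg_left hpi.le (by norm_num) (by nlinarith)
  have ht0 : 0 < t := by linarith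
  have hst : 0 < Real.sin t :=
    Real.sin_pos_of_pos_of_lt_pi ht0 (by linarith)
  have hsN : Real.sin (N * t) ≠ 0 := by
    intro h
    obtain ⟨j, hj⟩ := Real.sin_eq_zero_iff.mp h
    have hb' : (j : ℝ) * π < N * (π / 2) := by
      rw [hj]
      have : (0:ℝ) < N := by linarith
      nlinarith
    have ha' : ((N : ℝ) - 1) * (π / 2) < (j : ℝ) * π := by
      rw [hj]
      have h1 : (N : ℝ) * (π / 2 - π / (2 * N)) < N * t := by
        apply mul_lt_mul_of_pos_left ha (by linarith)
      have h2 : (N : ℝ) * (π / 2 - π / (2 * N)) = ((N : ℝ) - 1) * (π / 2) := by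
        field_simp
      linarith
    have hj1 : 2 * (j : ℝ) < N := by nlinarith
    have hj2 : (N : ℝ) - 1 < 2 * (j : ℝ) := by nlinarith
    have hj1' : 2 * j < (N : ℤ) := by exact_mod_cast hj1
    have hj2' : (N : ℤ) - 1 < 2 * j := by exact_mod_cast hj2
    omega
  have hsq : 0 < Real.sin (N * t) ^ 2 := by positivity
  nlinarith [tele N t]

private noncomputable def fcs (N : ℕ) (t : ℝ) : ℝ :=
  ∑ k ∈ range N, Real.cos ((2 * k + 1) * t) / (2 * k + 1)

private lemma fcs_deriv (N : ℕ) (t : ℝ) :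
    HasDerivAt (fcs N) (-(∑ k ∈ range N, Real.sin ((2 * k + 1) * t))) t := by
  have h : HasDerivAt (fun u => ∑ k ∈ range N, Real.cos ((2 * k + 1) * u) / (2 * k + 1))
      (∑ k ∈ range N, -Real.sin ((2 * k + 1) * t)) t := by
    apply HasDerivAt.fun_sum
    intro k _
    have hc : (2 * (k : ℝ) + 1) ≠ 0 := by positivity
    have h1 : HasDerivAt (fun u : ℝ => (2 * (k : ℝ) + 1) * u) (2 * (k : ℝ) + 1) t := by
      simpa using (hasDerivAt_id t).const_mul (2 * (k : ℝ) + 1)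
    have h2 : HasDerivAt (fun u : ℝ => Real.cos ((2 * k + 1) * u))
        (-Real.sin ((2 * k + 1) * t) * (2 * k + 1)) t :=
      (Real.hasDerivAt_cos ((2 * k + 1) * t)).comp t h1
    have h3 := h2.div_const (2 * (k : ℝ) + 1)
    rw [mul_div_cancel_right₀ _ hc] at h3
    exact h3
  have : (∑ k ∈ range N, -Real.sin ((2 * k + 1) * t))
      = -(∑ k ∈ range N, Real.sin ((2 * k + 1) * t)) := by
    rw [Finset.sum_neg_distrib]
  rw [this] at h
  exact h

private lemma g_continuous (N : ℕ) :
    Continuous (fun t => ∑ k ∈ range N, Real.sin ((2 * k + 1) * t)) := by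
  apply continuous_finset_sum
  intro k _
  exact Real.continuous_sin.comp (continuous_const.mul continuous_id)

private lemma fcs_eq_integral (N : ℕ) (u : ℝ) (hu : u ≤ π / 2) :
    fcs N u = ∫ t in u..(π / 2), ∑ k ∈ range N, Real.sin ((2 * k + 1) * t) := by
  have hftc := intervalIntegral.integral_eq_sub_of_hasDerivAt
    (f := fcs N) (f' := fun t => -(∑ k ∈ range N, Real.sin ((2 * k + 1) * t)))
    (a := u) (b := π / 2)
    (fun t _ => fcs_deriv N t)
    (((g_continuous N).neg).intervalIntegrable u (π / 2))
  have hend : fcs N (π / 2) = 0 := by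
    unfold fcs
    apply Finset.sum_eq_zero
    intro k _
    rw [cos_odd_pi_div_two]
    simp
  rw [intervalIntegral.integral_neg] at hftc
  rw [hend] at hftc
  linarith

private lemma fcs_pos (N : ℕ) (hN : 1 ≤ N) (u : ℝ) (h0 : 0 ≤ u) (h1 : u < π / 2) :
    0 < fcs N u := by
  have hNR : (1 : ℝ) ≤ N := by exact_mod_cast hN
  have hpi := Real.pi_pos
  set a := max u (π / 2 - π / (2 * N)) with ha_def
  have hdivpos : 0 < π / (2 * N) := by positivity
  have hua : u ≤ a := le_max_left _ _
  have hlb : π / 2 - π / (2 * N) ≤ a := le_max_right _ _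
  have ha2 : a < π / 2 := by
    rw [ha_def]
    apply max_lt h1 (by linarith)
  have ha0 : 0 ≤ a := le_trans h0 hua
  set g := fun t => ∑ k ∈ range N, Real.sin ((2 * k + 1) * t) with hg
  have hint1 : IntervalIntegrable g MeasureTheory.volume u a :=
    (g_continuous N).intervalIntegrable u a
  have hint2 : IntervalIntegrable g MeasureTheory.volume a (π / 2) :=
    (g_continuous N).intervalIntegrable a (π / 2)
  have hsplit : (∫ t in u..(π / 2), g t) = (∫ t in u..a, g t) + ∫ t in a..(π / 2), g t :=
    (intervalIntegral.integral_add_adjacent_intervals hint1 hint2).symm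
  have I1 : 0 ≤ ∫ t in u..a, g t := by
    apply intervalIntegral.integral_nonneg hua
    intro t ht
    exact g_nonneg N t (le_trans h0 ht.1) (le_trans ht.2 ha2.le)
  have I2 : 0 < ∫ t in a..(π / 2), g t := by
    apply intervalIntegral.intervalIntegral_pos_of_pos_on hint2 _ ha2
    intro t ht
    exact g_pos N hN t (lt_of_le_of_lt hlb ht.1) ht.2
  rw [fcs_eq_integral N u h1.le, hsplit]
  linarith

private lemma fcs_pos' (N : ℕ) (hN : 1 ≤ N) (u : ℝ) (h : |u| < π / 2) : 0 < fcs N u := by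
  rcases le_or_gt 0 u with hu | hu
  · exact fcs_pos N hN u hu (by rw [abs_of_nonneg hu] at h; exact h)
  · have h' : 0 < fcs N (-u) := by
      apply fcs_pos N hN (-u) (by linarith)
      rw [abs_of_neg hu] at h
      exact h
    have : fcs N (-u) = fcs N u := by
      unfold fcs
      apply Finset.sum_congr rfl
      intro k _
      rw [show (2 * (k : ℝ) + 1) * (-u) = -((2 * k + 1) * u) by ring, Real.cos_neg]
    rwa [this] at h'

private lemma T_pos (N : ℕ) (hN : 1 ≤ N) (x : ℝ) (hx : 0 < x) (hx' : x < π) :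
    0 < ∑ k ∈ range N, (-1 : ℝ) ^ k * Real.sin ((2 * k + 1) * x) / (2 * k + 1) := by
  have h := fcs_pos' N hN (π / 2 - x) (by rw [abs_lt]; constructor <;> linarith)
  have heq : fcs N (π / 2 - x)
      = ∑ k ∈ range N, (-1 : ℝ) ^ k * Real.sin ((2 * k + 1) * x) / (2 * k + 1) := by
    unfold fcs
    apply Finset.sum_congr rfl
    intro k _
    rw [show (2 * (k : ℝ) + 1) * (π / 2 - x)
        = (2 * k + 1) * (π / 2) - (2 * k + 1) * x by ring,
      Real.cos_sub, cos_odd_pi_div_two, sin_odd_pi_div_two]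
    ring
  rwa [heq] at h

private lemma hockey (M : ℕ) : ∀ a : ℕ,
    ∑ i ∈ range (a + 1), (i + M).choose M = (a + M + 1).choose (M + 1)
  | 0 => by simp
  | a + 1 => by
    have e : a + 1 + M = a + M + 1 := by omega
    rw [Finset.sum_range_succ, hockey M a, e, Nat.choose_succ_succ' (a + M + 1) M]
    exact Nat.add_comm _ _

theorem stmt_7 (m n : ℕ) (hm : 1 ≤ m) (hn : 1 ≤ n) (x : ℝ) (hx : 0 < x) (hx' : x < π) :
    0 < ∑ k ∈ Finset.range (n + 1),
        (-1 : ℝ) ^ k * ((n - k + m).choose m : ℝ) * Real.sin ((2 * k + 1) * x) / (2 * k + 1) := by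
  obtain ⟨M, rfl⟩ : ∃ M, m = M + 1 := ⟨m - 1, (Nat.succ_pred_eq_of_pos hm).symm⟩
  have step1 : ∑ k ∈ Finset.range (n + 1),
        (-1 : ℝ) ^ k * ((n - k + (M + 1)).choose (M + 1) : ℝ)
          * Real.sin ((2 * k + 1) * x) / (2 * k + 1)
      = ∑ k ∈ Finset.range (n + 1), ∑ i ∈ Finset.range (n - k + 1),
          ((i + M).choose M : ℝ) * ((-1 : ℝ) ^ k * Real.sin ((2 * k + 1) * x) / (2 * k + 1)) := by
    apply Finset.sum_congr rfl
    intro k _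
    rw [← Finset.sum_mul]
    have hc : ((n - k + (M + 1)).choose (M + 1) : ℝ)
        = ∑ i ∈ Finset.range (n - k + 1), ((i + M).choose M : ℝ) := by
      rw [← Nat.cast_sum]
      norm_cast
      rw [hockey M (n - k), Nat.add_assoc]
    rw [hc]
    ring
  rw [step1]
  rw [Finset.sum_comm' (t' := Finset.range (n + 1)) (s' := fun i => Finset.range (n - i + 1))
    (by intro k i; simp only [Finset.mem_range]; omega)]
  apply Finset.sum_pos
  · intro i hi
    simp only [Finset.mem_range] at hi
    have hc : (0 : ℝ) < ((i + M).choose M : ℝ) := by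
      exact_mod_cast Nat.choose_pos (by omega)
    have hT := T_pos (n - i + 1) (by omega) x hx hx'
    calc (0 : ℝ) < ((i + M).choose M : ℝ)
          * ∑ k ∈ range (n - i + 1), (-1 : ℝ) ^ k * Real.sin ((2 * k + 1) * x) / (2 * k + 1) :=
        mul_pos hc hT
      _ = ∑ k ∈ Finset.range (n - i + 1),
          ((i + M).choose M : ℝ) * ((-1 : ℝ) ^ k * Real.sin ((2 * k + 1) * x) / (2 * k + 1)) := by
        rw [Finset.mul_sum]
  · exact ⟨0, Finset.mem_range.mpr (by omega)⟩
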